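/- Let M_n = arcsinh(1) - √2 Σ_{k=0}^{n-1} [(-1)^k/(k+1)] Σ_{m=0}^{⌊k/2⌋} (2m choose m)(-1/4)^m. Then lim_{n→∞} M_n = 0. -/

import Mathlib

open Real Filter

noncomputable def Mdiag (n : ℕ) : ℝ :=
  Real.arsinh 1 -
    Real.sqrt 2 * ∑ k ∈ Finset.range n,
      ((-1 : ℝ) ^ k / (k + 1)) *
        ∑ m ∈ Finset.range (k / 2 + 1), (Nat.choose (2 * m) m : ℝ) * (-1 / 4) ^ m

open Finset Topology MeasureTheory

lemma cb_rec (n : ℕ) : Nat.centralBinom (n+1) + 2 * catalan n = 4 * Nat.centralBinom n := by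
  have h1 := Nat.succ_mul_centralBinom_succ n
  have h2 := succ_mul_catalan_eq_centralBinom n
  have : (n+1) * (Nat.centralBinom (n+1) + 2 * catalan n) = (n+1) * (4 * Nat.centralBinom n) := by
    ring_nf
    ring_nf at h1 h2
    nlinarith [h1, h2]
  exact Nat.eq_of_mul_eq_mul_left (Nat.succ_pos n) this

lemma catalan_succ_range (n : ℕ) :
    catalan (n + 1) = ∑ i ∈ range (n+1), catalan i * catalan (n - i) := by
  rw [catalan_succ' n, Nat.sum_antidiagonal_eq_sum_range_succ (fun x y => catalan x * catalan y)]

lemma convD (n : ℕ) :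
    2 * ∑ i ∈ range (n+1), Nat.centralBinom i * catalan (n - i) = Nat.centralBinom (n+1) := by
  induction n with
  | zero => simp [Nat.centralBinom]
  | succ n ih =>
    have hcat := catalan_succ_range n
    have hstep : ∀ i ∈ range (n+1),
        Nat.centralBinom (i+1) * catalan (n - i) + 2 * (catalan i * catalan (n - i))
          = 4 * (Nat.centralBinom i * catalan (n - i)) := by
      intro i _
      have := cb_rec i
      nlinarith [this]
    have hsum := Finset.sum_congr rfl hstep
    rw [Finset.sum_add_distrib, ← Finset.mul_sum, ← Finset.mul_sum] at hsum
    have hsplit : ∑ i ∈ range (n+2), Nat.centralBinom i * catalan (n+1-i)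
        = ∑ i ∈ range (n+1), Nat.centralBinom (i+1) * catalan (n-i) + catalan (n+1) := by
      rw [Finset.sum_range_succ']
      simp [Nat.succ_sub_succ_eq_sub]
    rw [hsplit]
    have h2 := cb_rec (n+1)
    omega

lemma convA (n : ℕ) :
    ∑ i ∈ range (n+1), Nat.centralBinom i * Nat.centralBinom (n - i) = 4 ^ n := by
  induction n with
  | zero => simp [Nat.centralBinom]
  | succ n ih =>
    have hD : 2 * ∑ i ∈ range (n+1), catalan i * Nat.centralBinom (n - i)
        = Nat.centralBinom (n+1) := by
      rw [← convD n]
      congr 1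
      rw [← Finset.sum_range_reflect (fun i => catalan i * Nat.centralBinom (n - i)) (n+1)]
      apply Finset.sum_congr rfl
      intro i hi
      simp only [Finset.mem_range] at hi
      have h1 : n + 1 - 1 - i = n - i := by omega
      have h2 : n - (n - i) = i := by omega
      rw [h1, h2, mul_comm]
    have hstep : ∀ i ∈ range (n+1),
        Nat.centralBinom (i+1) * Nat.centralBinom (n-i)
          + 2 * (catalan i * Nat.centralBinom (n-i))
          = 4 * (Nat.centralBinom i * Nat.centralBinom (n-i)) := by
      intro i _
      have := cb_rec i
      nlinarith [this]
    have hsum := Finset.sum_congr rfl hstep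
    rw [Finset.sum_add_distrib, ← Finset.mul_sum, ← Finset.mul_sum] at hsum
    have hsplit : ∑ i ∈ range (n+2), Nat.centralBinom i * Nat.centralBinom (n+1-i)
        = ∑ i ∈ range (n+1), Nat.centralBinom (i+1) * Nat.centralBinom (n-i)
          + Nat.centralBinom (n+1) := by
      rw [Finset.sum_range_succ']
      simp [Nat.succ_sub_succ_eq_sub]
    rw [hsplit]
    have hp : (4:ℕ)^(n+1) = 4 * 4^n := by ring
    omega

lemma cb_sq (m : ℕ) : Nat.centralBinom m ^ 2 * (2*m+1) ≤ 16 ^ m := by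
  induction m with
  | zero => simp [Nat.centralBinom]
  | succ m ih =>
    have h1 := Nat.succ_mul_centralBinom_succ m
    have key : ((m+1) * Nat.centralBinom (m+1))^2 * (2*(m+1)+1) ≤ (m+1)^2 * 16^(m+1) := by
      rw [h1]
      calc (2 * (2*m+1) * Nat.centralBinom m)^2 * (2*(m+1)+1)
          = 4 * (2*m+1) * (2*m+3) * (Nat.centralBinom m ^2 * (2*m+1)) := by ring
        _ ≤ 4 * (2*m+1) * (2*m+3) * 16 ^ m := Nat.mul_le_mul_left _ ih
        _ ≤ (m+1)^2 * 16^(m+1) := by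
            have h : 4 * (2*m+1) * (2*m+3) ≤ 16 * (m+1)^2 := by nlinarith
            calc 4 * (2*m+1) * (2*m+3) * 16^m ≤ 16 * (m+1)^2 * 16^m :=
              Nat.mul_le_mul_right _ h
              _ = (m+1)^2 * 16^(m+1) := by ring
    have hpos : 0 < (m+1)^2 := by positivity
    nlinarith [key, Nat.centralBinom_pos (m+1)]

noncomputable def creal (m : ℕ) : ℝ := (Nat.choose (2*m) m : ℝ) * (-1/4)^m
noncomputable def bb (m : ℕ) : ℝ := (Nat.centralBinom m : ℝ) / 4^m

lemma creal_eq (m : ℕ) : creal m = (-1)^m * bb m := by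
  unfold creal bb
  rw [Nat.centralBinom_eq_two_mul_choose]
  rw [div_pow]
  ring

lemma bb_nonneg (m : ℕ) : 0 ≤ bb m := by unfold bb; positivity

lemma bb_zero : bb 0 = 1 := by simp [bb, Nat.centralBinom]

lemma bb_succ_le (m : ℕ) : bb (m+1) ≤ bb m := by
  have h := cb_rec m
  have hc : (Nat.centralBinom (m+1) : ℝ) ≤ 4 * Nat.centralBinom m := by
    have : Nat.centralBinom (m+1) ≤ 4 * Nat.centralBinom m := by omega
    exact_mod_cast this
  unfold bb
  rw [div_le_div_iff₀ (by positivity) (by positivity)]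
  have h4 : (0:ℝ) < 4 ^ m := by positivity
  calc (Nat.centralBinom (m+1) : ℝ) * 4 ^ m ≤ (4 * Nat.centralBinom m) * 4^m := by
        exact mul_le_mul_of_nonneg_right hc (le_of_lt h4)
    _ = (Nat.centralBinom m : ℝ) * 4 ^ (m+1) := by ring

lemma bb_antitone : Antitone bb := antitone_nat_of_succ_le bb_succ_le

lemma bb_le_one (m : ℕ) : bb m ≤ 1 := by
  have := bb_antitone (Nat.zero_le m)
  rwa [bb_zero] at this

lemma bb_sq_le (m : ℕ) : bb m ^ 2 * (2*m+1) ≤ 1 := by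
  have h := cb_sq m
  have hr : ((Nat.centralBinom m : ℝ))^2 * (2*m+1) ≤ 16^m := by exact_mod_cast h
  unfold bb
  rw [div_pow]
  have h16 : ((4:ℝ)^m)^2 = 16^m := by
    rw [← pow_mul, mul_comm, pow_mul]; norm_num
  rw [h16, div_mul_eq_mul_div, div_le_one (by positivity)]
  exact hr

lemma bb_le_inv_sqrt (m : ℕ) : bb m ≤ (Real.sqrt (2*m+1))⁻¹ := by
  rw [← Real.sqrt_inv]
  rw [Real.le_sqrt (bb_nonneg m) (by positivity)]
  have h := bb_sq_le m
  rw [inv_eq_one_div, le_div_iff₀ (by positivity)]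
  linarith

-- alternating series tail estimate
lemma alt_est {f : ℕ → ℝ} (hfa : Antitone f) {l : ℝ}
    (hl : Tendsto (fun n => ∑ i ∈ range n, (-1)^i * f i) atTop (𝓝 l)) (K : ℕ) :
    |l - ∑ i ∈ range K, (-1)^i * f i| ≤ f K := by
  rcases Nat.even_or_odd K with ⟨k, hk⟩ | ⟨k, hk⟩
  · have hK : K = 2 * k := by omega
    subst hK
    have hlow := Antitone.alternating_series_le_tendsto hl hfa k
    have hupp := Antitone.tendsto_le_alternating_series hl hfa k
    rw [Finset.sum_range_succ] at hupp
    have hsgn : ((-1:ℝ))^(2*k) = 1 := by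
      rw [pow_mul]; norm_num
    rw [hsgn, one_mul] at hupp
    rw [abs_le]; constructor <;> linarith
  · have hK : K = 2 * k + 1 := by omega
    subst hK
    have hupp := Antitone.tendsto_le_alternating_series hl hfa k
    have hlow := Antitone.alternating_series_le_tendsto hl hfa (k+1)
    have h2 : 2 * (k+1) = 2*k+1+1 := by ring
    rw [h2, Finset.sum_range_succ] at hlow
    have hsgn : ((-1:ℝ))^(2*k+1) = -1 := by
      rw [pow_succ, pow_mul]; norm_num
    rw [hsgn, neg_one_mul] at hlow
    rw [abs_le]; constructor <;> linarith

lemma creal_term (m : ℕ) (x : ℝ) : creal m * x^(2*m) = (-1)^m * (bb m * x^(2*m)) := by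
  rw [creal_eq]; ring

lemma ff_antitone {x : ℝ} (hx0 : 0 ≤ x) (hx1 : x ≤ 1) :
    Antitone (fun m => bb m * x^(2*m)) := by
  apply antitone_nat_of_succ_le
  intro m
  apply mul_le_mul (bb_succ_le m) _ (by positivity) (bb_nonneg m)
  apply pow_le_pow_of_le_one hx0 hx1
  omega

lemma ff_nonneg {x : ℝ} (hx0 : 0 ≤ x) (m : ℕ) : 0 ≤ bb m * x^(2*m) := by
  have := bb_nonneg m; positivity

lemma ff_tendsto_zero {x : ℝ} (hx0 : 0 ≤ x) (hx1 : x ≤ 1) :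
    Tendsto (fun m => bb m * x^(2*m)) atTop (𝓝 0) := by
  apply squeeze_zero (f := fun m : ℕ => bb m * x^(2*m)) (g := fun m : ℕ => (Real.sqrt (2*(m:ℝ)+1))⁻¹) (fun m => ff_nonneg hx0 m)
  · intro m
    calc bb m * x^(2*m) ≤ bb m * 1 := by
          apply mul_le_mul_of_nonneg_left _ (bb_nonneg m)
          exact pow_le_one₀ hx0 hx1
      _ = bb m := by ring
      _ ≤ (Real.sqrt (2*m+1))⁻¹ := bb_le_inv_sqrt m
  · have h1 : Tendsto (fun m : ℕ => ((2*m+1 : ℝ))⁻¹) atTop (𝓝 0) := by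
      apply Tendsto.inv_tendsto_atTop
      apply tendsto_atTop_add_const_right
      exact (tendsto_natCast_atTop_atTop (R := ℝ)).const_mul_atTop (by norm_num)
    have h2 := h1.sqrt
    rw [Real.sqrt_zero] at h2
    apply h2.congr
    intro m
    rw [Real.sqrt_inv]

lemma summable_norm_c {x : ℝ} (hx0 : 0 ≤ x) (hx1 : x < 1) :
    Summable (fun m => ‖creal m * x^(2*m)‖) := by
  have hxx : x^2 < 1 := by nlinarith
  apply Summable.of_nonneg_of_le (fun m => norm_nonneg _) (fun m => ?_)
    (summable_geometric_of_lt_one (by positivity) hxx)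
  rw [norm_mul, norm_pow]
  have h1 : ‖creal m‖ ≤ 1 := by
    rw [creal_eq, norm_mul, norm_pow, norm_neg, norm_one, one_pow, one_mul,
      Real.norm_eq_abs, abs_of_nonneg (bb_nonneg m)]
    exact bb_le_one m
  have h2 : ‖x‖^(2*m) = (x^2)^m := by
    rw [Real.norm_eq_abs, abs_of_nonneg hx0, ← pow_mul]
  calc ‖creal m‖ * ‖x‖^(2*m) ≤ 1 * ‖x‖^(2*m) := by
        apply mul_le_mul_of_nonneg_right h1 (by positivity)
    _ = (x^2)^m := by rw [one_mul, h2]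

lemma hasSum_c {x : ℝ} (hx0 : 0 ≤ x) (hx1 : x < 1) :
    HasSum (fun m => creal m * x^(2*m)) ((Real.sqrt (1+x^2))⁻¹) := by
  have hnorm := summable_norm_c hx0 hx1
  have hsummable : Summable (fun m => creal m * x^(2*m)) := hnorm.of_norm
  set u := ∑' m, creal m * x^(2*m) with hu
  have hinner : ∀ n, ∑ k ∈ range (n+1),
      (creal k * x^(2*k)) * (creal (n-k) * x^(2*(n-k))) = (-(x^2))^n := by
    intro n
    have hterm : ∀ k ∈ range (n+1), (creal k * x^(2*k)) * (creal (n-k) * x^(2*(n-k)))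
        = ((Nat.centralBinom k * Nat.centralBinom (n-k) : ℕ) : ℝ) * ((-1/4)^n * x^(2*n)) := by
      intro k hk
      rw [Finset.mem_range] at hk
      have hkn : k + (n - k) = n := by omega
      have e1 : (-1/4:ℝ)^k * (-1/4:ℝ)^(n-k) = (-1/4:ℝ)^n := by rw [← pow_add, hkn]
      have e2 : x^(2*k) * x^(2*(n-k)) = x^(2*n) := by
        rw [← pow_add]; congr 1; omega
      have e0 : (creal k * x^(2*k)) * (creal (n-k) * x^(2*(n-k)))
          = ((Nat.choose (2*k) k : ℝ) * (Nat.choose (2*(n-k)) (n-k) : ℝ))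
            * (((-1/4:ℝ)^k * (-1/4:ℝ)^(n-k)) * (x^(2*k) * x^(2*(n-k)))) := by
        unfold creal; ring
      rw [e0, e1, e2, Nat.cast_mul]
      simp only [Nat.centralBinom_eq_two_mul_choose]
      try ring
    rw [Finset.sum_congr rfl hterm, ← Finset.sum_mul, ← Nat.cast_sum, convA]
    have hx2 : x^(2*n) = (x^2)^n := by rw [← pow_mul]
    rw [hx2]
    push_cast
    rw [← mul_assoc, ← mul_pow, ← mul_pow]
    norm_num
  have husq : u * u = (1+x^2)⁻¹ := by
    rw [hu, tsum_mul_tsum_eq_tsum_sum_range_of_summable_norm hnorm hnorm,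
      tsum_congr hinner, tsum_geometric_of_norm_lt_one (by
        rw [norm_neg, Real.norm_eq_abs, abs_of_nonneg (by positivity)]
        nlinarith)]
    rw [sub_neg_eq_add]
  have hpart : Tendsto (fun n => ∑ i ∈ range n, (-1)^i * (bb i * x^(2*i))) atTop (𝓝 u) := by
    have h := hsummable.hasSum.tendsto_sum_nat
    apply h.congr
    intro n
    apply Finset.sum_congr rfl
    intro i _
    rw [creal_term]
  have hu0 : 0 ≤ u := by
    have := Antitone.alternating_series_le_tendsto hpart (ff_antitone hx0 (le_of_lt hx1)) 0
    simpa using this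
  have huval : u = (Real.sqrt (1+x^2))⁻¹ := by
    have h1 : u = Real.sqrt (u * u) := (Real.sqrt_mul_self hu0).symm
    rw [h1, husq, Real.sqrt_inv]
  exact huval ▸ hsummable.hasSum

lemma tail_bound {x : ℝ} (hx0 : 0 ≤ x) (hx1 : x < 1) (K : ℕ) :
    |(Real.sqrt (1+x^2))⁻¹ - ∑ m ∈ range K, creal m * x^(2*m)| ≤ bb K := by
  have hpart : Tendsto (fun n => ∑ i ∈ range n, (-1)^i * (bb i * x^(2*i))) atTop
      (𝓝 ((Real.sqrt (1+x^2))⁻¹)) := by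
    apply (hasSum_c hx0 hx1).tendsto_sum_nat.congr
    intro n
    exact Finset.sum_congr rfl (fun i _ => creal_term i x)
  have h := alt_est (ff_antitone hx0 (le_of_lt hx1)) hpart K
  calc |(Real.sqrt (1+x^2))⁻¹ - ∑ m ∈ range K, creal m * x^(2*m)|
      = |(Real.sqrt (1+x^2))⁻¹ - ∑ i ∈ range K, (-1)^i * (bb i * x^(2*i))| := by
        have hsum_eq : ∑ m ∈ range K, creal m * x^(2*m)
            = ∑ i ∈ range K, (-1)^i * (bb i * x^(2*i)) :=
          Finset.sum_congr rfl (fun i _ => creal_term i x)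
        rw [hsum_eq]
    _ ≤ bb K * x^(2*K) := h
    _ ≤ bb K := by
        calc bb K * x^(2*K) ≤ bb K * 1 := by
              apply mul_le_mul_of_nonneg_left (pow_le_one₀ hx0 (le_of_lt hx1)) (bb_nonneg K)
          _ = bb K := by ring

lemma bb_tendsto_zero : Tendsto bb atTop (𝓝 0) := by
  have h := ff_tendsto_zero (x := 1) (by norm_num) (by norm_num)
  apply h.congr
  intro m; simp

lemma Q_bound (K : ℕ) : |∑ m ∈ range K, creal m| ≤ 2 := by
  obtain ⟨l, hl⟩ := Antitone.tendsto_alternating_series_of_tendsto_zero bb_antitone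
    bb_tendsto_zero
  have heq : ∀ K, ∑ m ∈ range K, creal m = ∑ i ∈ range K, (-1)^i * bb i := by
    intro K
    exact Finset.sum_congr rfl (fun i _ => creal_eq i)
  have h0 := alt_est bb_antitone hl 0
  simp only [Finset.range_zero, Finset.sum_empty, sub_zero, bb_zero] at h0
  have hK := alt_est bb_antitone hl K
  have hbbK : bb K ≤ 1 := bb_le_one K
  rw [heq]
  have : |∑ i ∈ range K, (-1:ℝ)^i * bb i| ≤ |l| + |l - ∑ i ∈ range K, (-1)^i * bb i| := by
    have := abs_sub_abs_le_abs_sub (∑ i ∈ range K, (-1:ℝ)^i * bb i) l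
    have h2 := abs_sub_comm (∑ i ∈ range K, (-1:ℝ)^i * bb i) l
    linarith [abs_sub_abs_le_abs_sub (∑ i ∈ range K, (-1:ℝ)^i * bb i) l,
      abs_sub_comm l (∑ i ∈ range K, (-1:ℝ)^i * bb i)]
  linarith

noncomputable def SS (k : ℕ) : ℝ := ∑ m ∈ range (k/2+1), creal m
noncomputable def hNf (N : ℕ) (x : ℝ) : ℝ := ∑ k ∈ range N, ((-1:ℝ)^k * x^k) * SS k

lemma hN_eq (N : ℕ) {x : ℝ} (hx0 : 0 ≤ x) :
    hNf N x = (∑ m ∈ range ((N+1)/2), creal m * x^(2*m)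
      - (-x)^N * ∑ m ∈ range ((N+1)/2), creal m) / (1+x) := by
  have h1x : (0:ℝ) < 1 + x := by linarith
  rw [eq_div_iff (ne_of_gt h1x)]
  unfold hNf SS
  have step1 : ∀ k ∈ range N, ((-1:ℝ)^k * x^k) * ∑ m ∈ range (k/2+1), creal m
      = ∑ m ∈ range ((N+1)/2), (if 2*m ≤ k then ((-1:ℝ)^k * x^k) * creal m else 0) := by
    intro k hk
    rw [Finset.mem_range] at hk
    rw [Finset.mul_sum]
    rw [← Finset.sum_filter]
    congr 1
    ext a
    simp only [Finset.mem_filter, Finset.mem_range]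
    omega
  rw [Finset.sum_congr rfl step1, Finset.sum_comm, Finset.sum_mul]
  have step2 : ∀ m ∈ range ((N+1)/2),
      (∑ k ∈ range N, (if 2*m ≤ k then ((-1:ℝ)^k * x^k) * creal m else 0)) * (1+x)
      = creal m * x^(2*m) - (-x)^N * creal m := by
    intro m hm
    rw [Finset.mem_range] at hm
    have h2mN : 2*m ≤ N := by omega
    have hinner : ∑ k ∈ range N, (if 2*m ≤ k then ((-1:ℝ)^k * x^k) * creal m else 0)
        = creal m * ∑ k ∈ Finset.Ico (2*m) N, (-x)^k := by
      rw [Finset.mul_sum, ← Finset.sum_filter]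
      have hfil : (range N).filter (fun k => 2*m ≤ k) = Finset.Ico (2*m) N := by
        ext a
        simp only [Finset.mem_filter, Finset.mem_range, Finset.mem_Ico]
        omega
      rw [hfil]
      apply Finset.sum_congr rfl
      intro k _
      rw [neg_pow]
      ring
    rw [hinner]
    rw [geom_sum_Ico (by intro h; linarith : (-x) ≠ 1) h2mN]
    have hne : (-x) - 1 ≠ 0 := by intro h; nlinarith [hx0]
    have heven : (-x)^(2*m) = x^(2*m) := Even.neg_pow (even_two_mul m) x
    rw [heven]
    field_simp
    ring
  rw [Finset.sum_congr rfl step2, Finset.sum_sub_distrib, ← Finset.mul_sum]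

lemma pointwise_bound (N : ℕ) {x : ℝ} (hx0 : 0 ≤ x) (hx1 : x < 1) :
    |((1+x) * Real.sqrt (1+x^2))⁻¹ - hNf N x| ≤ bb ((N+1)/2) + 2 * x^N := by
  set K := (N+1)/2 with hK
  set P := ∑ m ∈ range K, creal m * x^(2*m) with hP
  set Q := ∑ m ∈ range K, creal m with hQ
  have h1x : (0:ℝ) < 1 + x := by linarith
  have hs : (0:ℝ) < Real.sqrt (1+x^2) := Real.sqrt_pos.mpr (by positivity)
  rw [hN_eq N hx0]
  have e : ((1+x) * Real.sqrt (1+x^2))⁻¹ - (P - (-x)^N * Q)/(1+x)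
      = ((Real.sqrt (1+x^2))⁻¹ - P + (-x)^N * Q)/(1+x) := by
    field_simp
    ring
  rw [e, abs_div, abs_of_pos h1x]
  have hnum : |(Real.sqrt (1+x^2))⁻¹ - P + (-x)^N * Q| ≤ bb K + 2 * x^N := by
    have h1 := tail_bound hx0 hx1 K
    have h2 := Q_bound K
    have h3 : |(-x)^N * Q| ≤ x^N * 2 := by
      rw [abs_mul]
      have : |(-x)^N| = x^N := by
        rw [abs_pow, abs_neg, abs_of_nonneg hx0]
      rw [this]
      apply mul_le_mul_of_nonneg_left h2 (by positivity)
    calc |(Real.sqrt (1+x^2))⁻¹ - P + (-x)^N * Q|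
        ≤ |(Real.sqrt (1+x^2))⁻¹ - P| + |(-x)^N * Q| := abs_add_le _ _
      _ ≤ bb K + x^N * 2 := add_le_add (h1) h3
      _ = bb K + 2 * x^N := by ring
  calc |(Real.sqrt (1+x^2))⁻¹ - P + (-x)^N * Q| / (1+x)
      ≤ |(Real.sqrt (1+x^2))⁻¹ - P + (-x)^N * Q| := by
        apply div_le_self (abs_nonneg _) (by linarith)
    _ ≤ bb K + 2 * x^N := hnum

lemma hasDeriv_F {x : ℝ} (hx : 0 ≤ x) :
    HasDerivAt (fun y => -Real.arsinh ((1-y)/(1+y)))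
      (Real.sqrt 2 * ((1+x) * Real.sqrt (1+x^2))⁻¹) x := by
  have h1x : (0:ℝ) < 1+x := by linarith
  have hr : HasDerivAt (fun y : ℝ => (1-y)/(1+y)) ((-2)/(1+x)^2) x := by
    have hu : HasDerivAt (fun y : ℝ => 1-y) (-1) x := by
      simpa using (hasDerivAt_id x).const_sub 1
    have hv : HasDerivAt (fun y : ℝ => 1+y) 1 x := by
      simpa using (hasDerivAt_id x).const_add 1
    have hdiv := hu.div hv (ne_of_gt h1x)
    refine hdiv.congr_deriv ?_
    symm
    field_simp
    ring
  have harc := (Real.hasDerivAt_arsinh ((1-x)/(1+x))).comp x hr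
  have hneg := harc.neg
  refine hneg.congr_deriv ?_
  symm
  have hsq : 1 + ((1-x)/(1+x))^2 = 2*(1+x^2)/(1+x)^2 := by
    field_simp
    ring
  have h2 : Real.sqrt (2*(1+x^2)/(1+x)^2) = Real.sqrt 2 * Real.sqrt (1+x^2) / (1+x) := by
    rw [Real.sqrt_div (by positivity : (0:ℝ) ≤ 2*(1+x^2))]
    rw [Real.sqrt_sq (le_of_lt h1x), Real.sqrt_mul (by norm_num : (0:ℝ) ≤ 2)]
  have hs2 : Real.sqrt 2 * Real.sqrt 2 = 2 := Real.mul_self_sqrt (by norm_num)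
  have hsp : (0:ℝ) < Real.sqrt (1+x^2) := Real.sqrt_pos.mpr (by positivity)
  have hs2p : (0:ℝ) < Real.sqrt 2 := Real.sqrt_pos.mpr (by norm_num)
  rw [hsq, h2]
  field_simp
  linear_combination hs2

lemma Gint : (∫ x in (0:ℝ)..1, Real.sqrt 2 * ((1+x) * Real.sqrt (1+x^2))⁻¹)
    = Real.arsinh 1 := by
  have hcont : ContinuousOn (fun x : ℝ => Real.sqrt 2 * ((1+x) * Real.sqrt (1+x^2))⁻¹)
      (Set.uIcc (0:ℝ) 1) := by
    apply ContinuousOn.mul continuousOn_const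
    apply ContinuousOn.inv₀
    · apply Continuous.continuousOn
      continuity
    · intro x hx
      rw [Set.uIcc_of_le (by norm_num : (0:ℝ) ≤ 1)] at hx
      have hx0 : (0:ℝ) ≤ x := hx.1
      have : (0:ℝ) < Real.sqrt (1+x^2) := Real.sqrt_pos.mpr (by positivity)
      positivity
  have hderiv : ∀ x ∈ Set.uIcc (0:ℝ) 1,
      HasDerivAt (fun y => -Real.arsinh ((1-y)/(1+y)))
        (Real.sqrt 2 * ((1+x) * Real.sqrt (1+x^2))⁻¹) x := by
    intro x hx
    rw [Set.uIcc_of_le (by norm_num : (0:ℝ) ≤ 1)] at hx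
    exact hasDeriv_F hx.1
  rw [intervalIntegral.integral_eq_sub_of_hasDerivAt hderiv
    (hcont.intervalIntegrable_of_Icc (by norm_num) |>.mono_set (by rw [Set.uIcc_of_le] <;> norm_num))]
  norm_num

lemma hNf_continuous (N : ℕ) : Continuous (hNf N) := by
  unfold hNf
  apply continuous_finset_sum
  intro k _
  fun_prop

lemma step_I (N : ℕ) : ∑ k ∈ range N, ((-1:ℝ)^k/((k:ℝ)+1)) * SS k
    = ∫ x in (0:ℝ)..1, hNf N x := by
  unfold hNf
  rw [intervalIntegral.integral_finset_sum (fun k _ => by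
    apply Continuous.intervalIntegrable; fun_prop)]
  apply Finset.sum_congr rfl
  intro k _
  have hre : ∀ x : ℝ, ((-1:ℝ)^k * x^k) * SS k = ((-1)^k * SS k) * x^k := fun x => by ring
  simp_rw [hre]
  rw [intervalIntegral.integral_const_mul, integral_pow]
  rw [zero_pow (Nat.succ_ne_zero k), one_pow]
  push_cast
  ring

lemma bound_integral (N : ℕ) :
    (∫ x in (0:ℝ)..1, Real.sqrt 2 * (bb ((N+1)/2) + 2 * x^N))
    = Real.sqrt 2 * (bb ((N+1)/2) + 2/((N:ℝ)+1)) := by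
  rw [intervalIntegral.integral_const_mul]
  congr 1
  rw [intervalIntegral.integral_add (by apply Continuous.intervalIntegrable; fun_prop)
    (by apply Continuous.intervalIntegrable; fun_prop)]
  rw [intervalIntegral.integral_const]
  rw [intervalIntegral.integral_const_mul, integral_pow]
  rw [zero_pow (Nat.succ_ne_zero N), one_pow]
  norm_num
  rw [div_eq_mul_inv]

lemma Mdiag_bound (N : ℕ) :
    ‖Mdiag N‖ ≤ Real.sqrt 2 * (bb ((N+1)/2) + 2/((N:ℝ)+1)) := by
  have hGint : IntervalIntegrable
      (fun x : ℝ => Real.sqrt 2 * ((1+x) * Real.sqrt (1+x^2))⁻¹) MeasureTheory.volume 0 1 := by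
    apply ContinuousOn.intervalIntegrable
    apply ContinuousOn.mul continuousOn_const
    apply ContinuousOn.inv₀
    · apply Continuous.continuousOn; continuity
    · intro x hx
      rw [Set.uIcc_of_le (by norm_num : (0:ℝ) ≤ 1)] at hx
      have hx0 : (0:ℝ) ≤ x := hx.1
      have : (0:ℝ) < Real.sqrt (1+x^2) := Real.sqrt_pos.mpr (by positivity)
      positivity
  have hhint : IntervalIntegrable (fun x : ℝ => Real.sqrt 2 * hNf N x)
      MeasureTheory.volume 0 1 :=
    ((continuous_const.mul (hNf_continuous N)).intervalIntegrable 0 1)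
  have hM : Mdiag N = ∫ x in (0:ℝ)..1,
      (Real.sqrt 2 * ((1+x) * Real.sqrt (1+x^2))⁻¹ - Real.sqrt 2 * hNf N x) := by
    rw [intervalIntegral.integral_sub hGint hhint, Gint,
      intervalIntegral.integral_const_mul, ← step_I N]
    rfl
  rw [hM]
  have hb := intervalIntegral.norm_integral_le_of_norm_le
    (g := fun x : ℝ => Real.sqrt 2 * (bb ((N+1)/2) + 2 * x^N))
    (μ := MeasureTheory.volume)
    (f := fun x : ℝ => Real.sqrt 2 * ((1+x) * Real.sqrt (1+x^2))⁻¹ - Real.sqrt 2 * hNf N x)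
    (a := 0) (b := 1) (by norm_num) ?_ (by apply Continuous.intervalIntegrable; fun_prop)
  · calc ‖∫ x in (0:ℝ)..1,
        (Real.sqrt 2 * ((1+x) * Real.sqrt (1+x^2))⁻¹ - Real.sqrt 2 * hNf N x)‖
        ≤ |∫ x in (0:ℝ)..1, Real.sqrt 2 * (bb ((N+1)/2) + 2 * x^N)| := hb.trans (le_abs_self _)
      _ = Real.sqrt 2 * (bb ((N+1)/2) + 2/((N:ℝ)+1)) := by
          rw [bound_integral N, abs_of_nonneg]
          have h1 := bb_nonneg ((N+1)/2)
          have h2 : (0:ℝ) < (N:ℝ)+1 := by positivity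
          positivity
  · have h01 : Set.uIoc (0:ℝ) 1 = Set.Ioc 0 1 := Set.uIoc_of_le (by norm_num)
    have hmem : ∀ᵐ t ∂(MeasureTheory.volume.restrict (Set.Ioc (0:ℝ) 1)),
        t ∈ Set.Ioc (0:ℝ) 1 :=
      MeasureTheory.ae_restrict_mem measurableSet_Ioc
    have hne1 : ∀ᵐ t ∂(MeasureTheory.volume), t ≠ (1:ℝ) := by
      rw [MeasureTheory.ae_iff]
      simp only [ne_eq, not_not]
      have : {a : ℝ | a = 1} = {(1:ℝ)} := by ext a; simp
      rw [this]
      exact Real.volume_singleton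
    filter_upwards [hne1] with t htne ht
    have ht0 : 0 ≤ t := le_of_lt ht.1
    have ht1 : t < 1 := lt_of_le_of_ne ht.2 htne
    have hpb := pointwise_bound N ht0 ht1
    have hfac : Real.sqrt 2 * ((1+t) * Real.sqrt (1+t^2))⁻¹ - Real.sqrt 2 * hNf N t
        = Real.sqrt 2 * (((1+t) * Real.sqrt (1+t^2))⁻¹ - hNf N t) := by ring
    rw [Real.norm_eq_abs, hfac, abs_mul, abs_of_nonneg (Real.sqrt_nonneg 2)]
    apply mul_le_mul_of_nonneg_left hpb (Real.sqrt_nonneg 2)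

theorem Mdiag_tendsto_zero : Tendsto Mdiag atTop (nhds 0) := by
  apply squeeze_zero_norm Mdiag_bound
  have h1 : Tendsto (fun N : ℕ => bb ((N+1)/2)) atTop (𝓝 0) := by
    apply bb_tendsto_zero.comp
    apply tendsto_atTop_atTop.mpr
    intro b
    exact ⟨2*b, fun a ha => by omega⟩
  have h2 : Tendsto (fun N : ℕ => 2/((N:ℝ)+1)) atTop (𝓝 0) := by
    have := tendsto_one_div_add_atTop_nhds_zero_nat (𝕜 := ℝ)
    have h3 := this.const_mul (2:ℝ)
    rw [mul_zero] at h3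
    apply h3.congr
    intro n
    field_simp
  have h4 := (h1.add h2).const_mul (Real.sqrt 2)
  norm_num at h4
  exact h4
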